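/- Let K be a commutative ring and A a nonpositively graded DG K-algebra, with Ā := H^0(A). Let M be a right DG A-module concentrated in degrees ≤ i₀ and N a left DG A-module concentrated in degrees ≤ j₀. Then there is a unique K-module isomorphism θ_{M,N} : H^{i₀}(M) ⊗_Ā H^{j₀}(N) ≅ H^{i₀+j₀}(M ⊗_A N) such that θ_{M,N}([m] ⊗ [n]) = [m ⊗ n] for all m ∈ M^{i₀}, n ∈ N^{j₀}. -/

import Mathlib

set_option maxHeartbeats 2000000
noncomputable section

open MulOpposite TensorProduct

/-- Balanced-tensor relations over a (noncommutative) `K`-algebra `Ab` inside the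
`K`-tensor product of a right `Ab`-module and a left `Ab`-module. -/
def brelK (K : Type) [CommRing K] (Ab : Type) [Ring Ab] (X Y : Type)
    [AddCommGroup X] [AddCommGroup Y] [Module K X] [Module K Y]
    [Module Abᵐᵒᵖ X] [Module Ab Y] : Submodule K (X ⊗[K] Y) :=
  Submodule.span K {x | ∃ (a : Ab) (x' : X) (y' : Y),
    x = (op a • x') ⊗ₜ[K] y' - x' ⊗ₜ[K] (a • y')}

/-- The tensor product `X ⊗_{Ab} Y` of a right `Ab`-module and a left `Ab`-module,
as a `K`-module. -/
abbrev BTK (K : Type) [CommRing K] (Ab : Type) [Ring Ab] (X Y : Type)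
    [AddCommGroup X] [AddCommGroup Y] [Module K X] [Module K Y]
    [Module Abᵐᵒᵖ X] [Module Ab Y] :=
  (X ⊗[K] Y) ⧸ brelK K Ab X Y

/-- The pure tensor `x ⊗ y` in `X ⊗_{Ab} Y`. -/
def BTK.mk {K : Type} [CommRing K] {Ab : Type} [Ring Ab] {X Y : Type}
    [AddCommGroup X] [AddCommGroup Y] [Module K X] [Module K Y]
    [Module Abᵐᵒᵖ X] [Module Ab Y] (x : X) (y : Y) : BTK K Ab X Y :=
  Submodule.Quotient.mk (x ⊗ₜ[K] y)


section MyHelpers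

variable {K : Type} [CommRing K]

lemma my_descend {P Q X : Type} [AddCommGroup P] [AddCommGroup Q] [AddCommGroup X]
    [Module K P] [Module K Q] [Module K X]
    (f : P →ₗ[K] Q) (hf : Function.Surjective f) (L : P →ₗ[K] X)
    (hker : ∀ p, f p = 0 → L p = 0) :
    ∃ g : Q →ₗ[K] X, ∀ p, g (f p) = L p := by
  refine ⟨(Submodule.liftQ (LinearMap.ker f) L (fun p hp => hker p hp)) ∘ₗ
    (f.quotKerEquivOfSurjective hf).symm.toLinearMap, fun p => ?_⟩
  have h1 : (f.quotKerEquivOfSurjective hf) (Submodule.Quotient.mk p) = f p := by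
    simp [LinearMap.quotKerEquivOfSurjective, LinearEquiv.trans_apply]
  have h2 : (f.quotKerEquivOfSurjective hf).symm (f p) = Submodule.Quotient.mk p := by
    rw [← h1, LinearEquiv.symm_apply_apply]
  simp only [LinearMap.coe_comp, Function.comp_apply, LinearEquiv.coe_toLinearMap, h2,
    Submodule.liftQ_apply]
  rfl

/-- Projection onto the degree `i` component of a graded module, as an endomorphism. -/
def gproj {M : Type} [AddCommGroup M] [Module K M] (ℳ : ℤ → Submodule K M)
    [DirectSum.Decomposition ℳ] (i : ℤ) : M →ₗ[K] M :=
  (ℳ i).subtype ∘ₗ (DirectSum.component K ℤ (fun j => ↥(ℳ j)) i) ∘ₗ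
    (DirectSum.decomposeLinearEquiv ℳ).toLinearMap

lemma gproj_same {M : Type} [AddCommGroup M] [Module K M] (ℳ : ℤ → Submodule K M)
    [DirectSum.Decomposition ℳ] (i : ℤ) {m : M} (hm : m ∈ ℳ i) : gproj ℳ i m = m := by
  simpa [gproj, DirectSum.component, DFinsupp.lapply, DirectSum.decomposeLinearEquiv_apply] using
    DirectSum.decompose_of_mem_same ℳ hm

lemma gproj_ne {M : Type} [AddCommGroup M] [Module K M] (ℳ : ℤ → Submodule K M)
    [DirectSum.Decomposition ℳ] {k i : ℤ} (h : k ≠ i) {m : M} (hm : m ∈ ℳ k) :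
    gproj ℳ i m = 0 := by
  simpa [gproj, DirectSum.component, DFinsupp.lapply, DirectSum.decomposeLinearEquiv_apply] using
    DirectSum.decompose_of_mem_ne ℳ hm h

end MyHelpers
/-- Plain Künneth trick over a nonpositive DG `K`-algebra `A` with
`Ā = H⁰(A)`: for a right DG `A`-module `M` concentrated in degrees ≤ i₀ and a left DG
`A`-module `N` concentrated in degrees ≤ j₀, there is a unique `K`-module isomorphism
`θ : H^{i₀}(M) ⊗_Ā H^{j₀}(N) ≅ H^{i₀+j₀}(M ⊗_A N)` with `θ([m] ⊗ [n]) = [m ⊗ n]`. -/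
theorem dg_kunneth_trick
    (K : Type) [CommRing K] (i0 j0 : ℤ)
    -- the nonpositive DG K-algebra A, as a graded K-algebra R with differential dR
    (R : Type) [Ring R] [Algebra K R] (𝒜 : ℤ → Submodule K R) [GradedRing 𝒜]
    (hA : ∀ i, 0 < i → 𝒜 i = ⊥)
    (dR : R →ₗ[K] R) (hdR : ∀ (i : ℤ), ∀ a ∈ 𝒜 i, dR a ∈ 𝒜 (i + 1))
    (hdRdd : ∀ a, dR (dR a) = 0)
    (hdRleib : ∀ (i : ℤ), ∀ a ∈ 𝒜 i, ∀ b : R,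
      dR (a * b) = dR a * b + (Int.negOnePow i : ℤ) • (a * dR b))
    -- M : right DG A-module concentrated in degrees ≤ i₀
    (M : Type) [AddCommGroup M] [Module K M] [Module Rᵐᵒᵖ M]
    (halgM : ∀ (k : K) (m : M), op (algebraMap K R k) • m = k • m)
    (ℳ : ℤ → Submodule K M) [DirectSum.Decomposition ℳ]
    (hMact : ∀ (i j : ℤ), ∀ a ∈ 𝒜 i, ∀ m ∈ ℳ j, op a • m ∈ ℳ (j + i))
    (dM : M →ₗ[K] M) (hdM : ∀ (j : ℤ), ∀ m ∈ ℳ j, dM m ∈ ℳ (j + 1))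
    (hdMdd : ∀ m, dM (dM m) = 0)
    (hdMleib : ∀ (i j : ℤ), ∀ a ∈ 𝒜 i, ∀ m ∈ ℳ j,
      dM (op a • m) = op a • dM m + (Int.negOnePow j : ℤ) • (op (dR a) • m))
    (hMconc : ∀ i, i0 < i → ℳ i = ⊥)
    -- N : left DG A-module concentrated in degrees ≤ j₀
    (N : Type) [AddCommGroup N] [Module K N] [Module R N]
    (halgN : ∀ (k : K) (n : N), (algebraMap K R k) • n = k • n)
    (𝒩 : ℤ → Submodule K N) [DirectSum.Decomposition 𝒩]
    (hNact : ∀ (i j : ℤ), ∀ a ∈ 𝒜 i, ∀ n ∈ 𝒩 j, a • n ∈ 𝒩 (i + j))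
    (dN : N →ₗ[K] N) (hdN : ∀ (j : ℤ), ∀ n ∈ 𝒩 j, dN n ∈ 𝒩 (j + 1))
    (hdNdd : ∀ n, dN (dN n) = 0)
    (hdNleib : ∀ (i : ℤ), ∀ a ∈ 𝒜 i, ∀ n : N,
      dN (a • n) = dR a • n + (Int.negOnePow i : ℤ) • (a • dN n))
    (hNconc : ∀ j, j0 < j → 𝒩 j = ⊥)
    -- Ā = H⁰(A) : a K-algebra with a projection prA : A⁰ → Ā, multiplicative on A⁰,
    -- surjective, with kernel d(A⁻¹)
    (Ab : Type) [Ring Ab] [Algebra K Ab] (prA : R →ₗ[K] Ab)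
    (hprmul : ∀ a b : R, a ∈ 𝒜 0 → b ∈ 𝒜 0 → prA (a * b) = prA a * prA b)
    (hprone : prA 1 = 1)
    (hprsurj : ∀ y : Ab, ∃ a ∈ 𝒜 0, prA a = y)
    (hprker : ∀ a ∈ 𝒜 0, (prA a = 0 ↔ ∃ x ∈ 𝒜 (-1), dR x = a))
    -- HM = H^{i₀}(M) : a right Ā-module with projection clsM from the cocycles ℳ^{i₀}
    (HM : Type) [AddCommGroup HM] [Module K HM] [Module Abᵐᵒᵖ HM]
    (clsM : M →ₗ[K] HM)
    (hclsMsurj : ∀ h : HM, ∃ m ∈ ℳ i0, clsM m = h)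
    (hclsMker : ∀ m ∈ ℳ i0, (clsM m = 0 ↔ ∃ x ∈ ℳ (i0 - 1), dM x = m))
    (hclsMact : ∀ a ∈ 𝒜 0, ∀ m ∈ ℳ i0,
      clsM (op a • m) = op (prA a) • clsM m)
    -- HN = H^{j₀}(N) : a left Ā-module with projection clsN from the cocycles 𝒩^{j₀}
    (HN : Type) [AddCommGroup HN] [Module K HN] [Module Ab HN]
    (clsN : N →ₗ[K] HN)
    (hclsNsurj : ∀ h : HN, ∃ n ∈ 𝒩 j0, clsN n = h)
    (hclsNker : ∀ n ∈ 𝒩 j0, (clsN n = 0 ↔ ∃ y ∈ 𝒩 (j0 - 1), dN y = n))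
    (hclsNact : ∀ a ∈ 𝒜 0, ∀ n ∈ 𝒩 j0, clsN (a • n) = prA a • clsN n) :
    -- H^{i₀+j₀}(M ⊗_A N) is the degree-(i₀+j₀) part of M ⊗ N modulo coboundaries and
    -- balanced relations; the unique isomorphism θ sends [m] ⊗ [n] to [m ⊗ n]
    ∃! θ : BTK K Ab HM HN ≃ₗ[K]
        (↥(Submodule.span K {x : M ⊗[K] N | ∃ i, ∃ m ∈ ℳ i, ∃ n ∈ 𝒩 (i0 + j0 - i),
            x = m ⊗ₜ[K] n}) ⧸
          Submodule.comap
            (Submodule.span K {x : M ⊗[K] N | ∃ i, ∃ m ∈ ℳ i, ∃ n ∈ 𝒩 (i0 + j0 - i),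
              x = m ⊗ₜ[K] n}).subtype
            ((Submodule.span K {x : M ⊗[K] N | ∃ i, ∃ m ∈ ℳ i, ∃ n ∈ 𝒩 (i0 + j0 - 1 - i),
                x = (dM m) ⊗ₜ[K] n + (Int.negOnePow i : ℤ) • (m ⊗ₜ[K] (dN n))}) ⊔
              brelK K R M N)),
      ∀ m (hm : m ∈ ℳ i0) n (hn : n ∈ 𝒩 j0),
        θ (BTK.mk (clsM m) (clsN n)) =
          Submodule.Quotient.mk
            ⟨m ⊗ₜ[K] n, Submodule.subset_span
              ⟨i0, m, hm, n, by rw [show i0 + j0 - i0 = j0 by ring]; exact hn, rfl⟩⟩ := by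

  classical
  have hMtop : ∀ i, i0 < i → ∀ m : M, m ∈ ℳ i → m = 0 := fun i hi m hm => by
    rw [hMconc i hi, Submodule.mem_bot] at hm; exact hm
  have hNtop : ∀ j, j0 < j → ∀ n : N, n ∈ 𝒩 j → n = 0 := fun j hj n hn => by
    rw [hNconc j hj, Submodule.mem_bot] at hn; exact hn
  have hAtop : ∀ e, 0 < e → ∀ a : R, a ∈ 𝒜 e → a = 0 := fun e he a ha => by
    rw [hA e he, Submodule.mem_bot] at ha; exact ha
  have hunit : ∀ (u : ℤˣ) (x : M ⊗[K] N), (u : ℤ) • (u : ℤ) • x = x := fun u x => by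
    rw [smul_smul, ← Units.val_mul, Int.units_mul_self, Units.val_one, one_smul]
  set S : Submodule K (M ⊗[K] N) := Submodule.span K {x : M ⊗[K] N | ∃ i, ∃ m ∈ ℳ i,
    ∃ n ∈ 𝒩 (i0 + j0 - i), x = m ⊗ₜ[K] n} with hSdef
  set Bd : Submodule K (M ⊗[K] N) := Submodule.span K {x : M ⊗[K] N | ∃ i, ∃ m ∈ ℳ i,
    ∃ n ∈ 𝒩 (i0 + j0 - 1 - i), x = (dM m) ⊗ₜ[K] n + (Int.negOnePow i : ℤ) • (m ⊗ₜ[K] (dN n))}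
    with hBddef
  set pB : Submodule K ↥S := Submodule.comap S.subtype (Bd ⊔ brelK K R M N) with hpBdef
  have memS : ∀ m ∈ ℳ i0, ∀ n ∈ 𝒩 j0, m ⊗ₜ[K] n ∈ S := fun m hm n hn =>
    Submodule.subset_span ⟨i0, m, hm, n, by rw [show i0 + j0 - i0 = j0 by ring]; exact hn, rfl⟩
  set πM : M →ₗ[K] M := gproj ℳ i0 with hπMdef
  set πN : N →ₗ[K] N := gproj 𝒩 j0 with hπNdef
  have hπM : ∀ {m : M}, m ∈ ℳ i0 → πM m = m := fun hm => gproj_same ℳ i0 hm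
  have hπMne : ∀ {k : ℤ}, k ≠ i0 → ∀ {m : M}, m ∈ ℳ k → πM m = 0 :=
    fun {k} hk {m} hm => gproj_ne ℳ hk hm
  have hπN : ∀ {n : N}, n ∈ 𝒩 j0 → πN n = n := fun hn => gproj_same 𝒩 j0 hn
  have hπNne : ∀ {k : ℤ}, k ≠ j0 → ∀ {n : N}, n ∈ 𝒩 k → πN n = 0 :=
    fun {k} hk {n} hn => gproj_ne 𝒩 hk hn
  set Φ : M ⊗[K] N →ₗ[K] BTK K Ab HM HN :=
    (brelK K Ab HM HN).mkQ ∘ₗ TensorProduct.map (clsM ∘ₗ πM) (clsN ∘ₗ πN) with hΦdef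
  have hΦ : ∀ (m : M) (n : N), Φ (m ⊗ₜ[K] n)
      = Submodule.Quotient.mk ((clsM (πM m)) ⊗ₜ[K] (clsN (πN n))) := fun m n => rfl
  -- Φ kills the coboundary relations
  have hBdker : Bd ≤ LinearMap.ker Φ := by
    rw [hBddef, Submodule.span_le]
    rintro x ⟨i, m, hm, n, hn, rfl⟩
    simp only [SetLike.mem_coe, LinearMap.mem_ker, map_add, map_zsmul, hΦ]
    have h1 : clsM (πM (dM m)) = 0 := by
      by_cases h : i + 1 = i0
      · have hm' : m ∈ ℳ (i0 - 1) := by rw [show i0 - 1 = i by omega]; exact hm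
        have hdm : dM m ∈ ℳ i0 := by rw [← h]; exact hdM i m hm
        rw [hπM hdm]
        exact (hclsMker _ hdm).mpr ⟨m, hm', rfl⟩
      · rw [hπMne h (hdM i m hm), map_zero]
    have h2 : clsN (πN (dN n)) = 0 := by
      by_cases h : i0 + j0 - 1 - i + 1 = j0
      · have hn' : n ∈ 𝒩 (j0 - 1) := by rw [show j0 - 1 = i0 + j0 - 1 - i by omega]; exact hn
        have hdn : dN n ∈ 𝒩 j0 := by rw [← h]; exact hdN _ n hn
        rw [hπN hdn]
        exact (hclsNker _ hdn).mpr ⟨n, hn', rfl⟩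
      · rw [hπNne h (hdN _ n hn), map_zero]
    rw [h1, h2, zero_tmul, tmul_zero]
    simp
  -- Φ kills the balanced relations over R
  have key : ∀ (a : R), ∀ (m : M) (n : N),
      Φ ((op a • m) ⊗ₜ[K] n - m ⊗ₜ[K] (a • n)) = 0 := by
    refine DirectSum.Decomposition.inductionOn 𝒜
      (motive := fun a => ∀ (m : M) (n : N),
        Φ ((op a • m) ⊗ₜ[K] n - m ⊗ₜ[K] (a • n)) = 0) ?_ ?_ ?_
    · intro m n; simp
    · intro e a
      refine DirectSum.Decomposition.inductionOn ℳ
        (motive := fun m => ∀ n : N,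
          Φ ((op (a : R) • m) ⊗ₜ[K] n - m ⊗ₜ[K] ((a : R) • n)) = 0) ?_ ?_ ?_
      · intro n; simp
      · intro i m
        refine DirectSum.Decomposition.inductionOn 𝒩
          (motive := fun n =>
            Φ ((op (a : R) • (m : M)) ⊗ₜ[K] n - (m : M) ⊗ₜ[K] ((a : R) • n)) = 0) ?_ ?_ ?_
        · simp
        · intro j n
          rcases lt_or_ge 0 e with he | he
          · have hz : (a : R) = 0 := hAtop e he _ a.2
            rw [hz]; simp
          rcases lt_or_ge i0 i with hi | hi
          · have hz : (m : M) = 0 := hMtop i hi _ m.2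
            rw [hz]; simp
          rcases lt_or_ge j0 j with hj | hj
          · have hz : (n : N) = 0 := hNtop j hj _ n.2
            rw [hz]; simp
          by_cases hmain : e = 0 ∧ i = i0 ∧ j = j0
          · obtain ⟨he0, hi0, hj0⟩ := hmain
            have hmi0 : (m : M) ∈ ℳ i0 := hi0 ▸ m.2
            have hnj0 : (n : N) ∈ 𝒩 j0 := hj0 ▸ n.2
            have ha0 : (a : R) ∈ 𝒜 0 := he0 ▸ a.2
            have ham : op (a : R) • (m : M) ∈ ℳ i0 := by
              have := hMact 0 i0 _ ha0 _ hmi0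
              rwa [add_zero] at this
            have han : (a : R) • (n : N) ∈ 𝒩 j0 := by
              have := hNact 0 j0 _ ha0 _ hnj0
              rwa [zero_add] at this
            rw [map_sub, hΦ, hΦ, hπM ham, hπM hmi0, hπN hnj0, hπN han,
              hclsMact _ ha0 _ hmi0, hclsNact _ ha0 _ hnj0,
              ← Submodule.mkQ_apply, ← Submodule.mkQ_apply, ← map_sub,
              Submodule.mkQ_apply, Submodule.Quotient.mk_eq_zero]
            exact Submodule.subset_span ⟨prA (a : R), clsM (m : M), clsN (n : N), rfl⟩
          · push_neg at hmain
            rw [map_sub, hΦ, hΦ]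
            have h1 : clsM (πM (op (a : R) • (m : M))) ⊗ₜ[K] (clsN (πN (n : N)))
                = (0 : HM ⊗[K] HN) := by
              by_cases hj' : j = j0
              · have hie : i + e ≠ i0 := by
                  intro hcon
                  have he0 : e = 0 := by omega
                  exact hmain he0 (by omega) hj'
                rw [hπMne hie (hMact e i _ a.2 _ m.2), map_zero, zero_tmul]
              · rw [hπNne hj' n.2, map_zero, tmul_zero]
            have h2 : clsM (πM (m : M)) ⊗ₜ[K] (clsN (πN ((a : R) • (n : N))))
                = (0 : HM ⊗[K] HN) := by
              by_cases hi' : i = i0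
              · have hej : e + j ≠ j0 := by
                  intro hcon
                  have he0 : e = 0 := by omega
                  exact hmain he0 hi' (by omega)
                rw [hπNne hej (hNact e j _ a.2 _ n.2), map_zero, tmul_zero]
              · rw [hπMne hi' m.2, map_zero, zero_tmul]
            rw [h1, h2]
            simp
        · intro n n' hn hn'
          have expand : (op (a : R) • (m : M)) ⊗ₜ[K] (n + n')
                - (m : M) ⊗ₜ[K] ((a : R) • (n + n'))
              = ((op (a : R) • (m : M)) ⊗ₜ[K] n - (m : M) ⊗ₜ[K] ((a : R) • n))
                + ((op (a : R) • (m : M)) ⊗ₜ[K] n' - (m : M) ⊗ₜ[K] ((a : R) • n')) := by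
            rw [smul_add, tmul_add, tmul_add]; abel
          rw [expand, map_add, hn, hn', add_zero]
      · intro m m' hm hm'
        intro n
        have expand : (op (a : R) • (m + m')) ⊗ₜ[K] n - (m + m') ⊗ₜ[K] ((a : R) • n)
            = ((op (a : R) • m) ⊗ₜ[K] n - m ⊗ₜ[K] ((a : R) • n))
              + ((op (a : R) • m') ⊗ₜ[K] n - m' ⊗ₜ[K] ((a : R) • n)) := by
          rw [smul_add, add_tmul, add_tmul]; abel
        rw [expand, map_add, hm n, hm' n, add_zero]
    · intro a a' ha ha' m n
      have expand : (op (a + a') • m) ⊗ₜ[K] n - m ⊗ₜ[K] ((a + a') • n)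
          = ((op a • m) ⊗ₜ[K] n - m ⊗ₜ[K] (a • n))
            + ((op a' • m) ⊗ₜ[K] n - m ⊗ₜ[K] (a' • n)) := by
        rw [op_add, add_smul, add_smul, add_tmul, tmul_add]; abel
      rw [expand, map_add, ha m n, ha' m n, add_zero]
  have hbrelRker : brelK K R M N ≤ LinearMap.ker Φ := by
    intro x hx
    rw [LinearMap.mem_ker]
    refine Submodule.span_induction (p := fun x _ => Φ x = 0) ?_ (map_zero Φ)
      (fun u v _ _ hu hv => by show Φ (u + v) = 0; rw [map_add, hu, hv, add_zero])
      (fun k u _ hu => by show Φ (k • u) = 0; rw [map_smul]; show k • Φ u = 0; rw [hu, smul_zero]) hx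
    rintro _ ⟨a, m, n, rfl⟩
    exact key a m n
  have hBBker : Bd ⊔ brelK K R M N ≤ LinearMap.ker Φ := sup_le hBdker hbrelRker
  set ψ : (↥S ⧸ pB) →ₗ[K] BTK K Ab HM HN :=
    Submodule.liftQ pB (Φ ∘ₗ S.subtype)
      (fun t ht => LinearMap.mem_ker.mpr
        (LinearMap.mem_ker.mp (hBBker (Submodule.mem_comap.mp ht)))) with hψdef
  have hψ : ∀ t : ↥S, ψ (Submodule.Quotient.mk t) = Φ (t : M ⊗[K] N) := fun t => rfl
  -- the map the other way
  set cM : ↥(ℳ i0) →ₗ[K] HM := clsM ∘ₗ (ℳ i0).subtype with hcMdef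
  set cN : ↥(𝒩 j0) →ₗ[K] HN := clsN ∘ₗ (𝒩 j0).subtype with hcNdef
  have hcMsurj : Function.Surjective cM := fun h => by
    obtain ⟨m, hm, hcl⟩ := hclsMsurj h; exact ⟨⟨m, hm⟩, hcl⟩
  have hcNsurj : Function.Surjective cN := fun h => by
    obtain ⟨n, hn, hcl⟩ := hclsNsurj h; exact ⟨⟨n, hn⟩, hcl⟩
  set b0 : ↥(ℳ i0) →ₗ[K] ↥(𝒩 j0) →ₗ[K] ↥S :=
    LinearMap.mk₂ K (fun x y => (⟨(x : M) ⊗ₜ[K] (y : N), memS _ x.2 _ y.2⟩ : ↥S))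
      (fun x x' y => Subtype.ext (by simp [add_tmul]))
      (fun k x y => Subtype.ext (by simp [smul_tmul']))
      (fun x y y' => Subtype.ext (by simp [tmul_add]))
      (fun k x y => Subtype.ext (by simp [tmul_smul])) with hb0def
  set L : (↥(ℳ i0) ⊗[K] ↥(𝒩 j0)) →ₗ[K] (↥S ⧸ pB) :=
    TensorProduct.lift (b0.compr₂ pB.mkQ) with hLdef
  have hL : ∀ (x : ↥(ℳ i0)) (y : ↥(𝒩 j0)),
      L (x ⊗ₜ[K] y)
        = Submodule.Quotient.mk (⟨(x : M) ⊗ₜ[K] (y : N), memS _ x.2 _ y.2⟩ : ↥S) :=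
    fun x y => rfl
  have hrange1 : LinearMap.range (LinearMap.lTensor ↥(ℳ i0) (LinearMap.ker cN).subtype)
      ≤ LinearMap.ker L := by
    rw [LinearMap.range_le_ker_iff]
    apply TensorProduct.ext'
    intro x k
    simp only [LinearMap.comp_apply, LinearMap.lTensor_tmul, LinearMap.zero_apply]
    have hk : clsN (((k : ↥(𝒩 j0)) : N)) = 0 := LinearMap.mem_ker.mp k.2
    obtain ⟨y, hy, hdy⟩ := (hclsNker _ (k : ↥(𝒩 j0)).2).mp hk
    rw [hL, Submodule.Quotient.mk_eq_zero]
    refine Submodule.mem_comap.mpr ?_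
    have hxd : dM (x : M) = 0 := hMtop (i0 + 1) (by omega) _ (hdM i0 _ x.2)
    have hy' : y ∈ 𝒩 (i0 + j0 - 1 - i0) := by
      rw [show i0 + j0 - 1 - i0 = j0 - 1 by ring]; exact hy
    have hgen : dM (x : M) ⊗ₜ[K] y + (Int.negOnePow i0 : ℤ) • ((x : M) ⊗ₜ[K] dN y) ∈ Bd :=
      Submodule.subset_span ⟨i0, (x : M), x.2, y, hy', rfl⟩
    rw [hxd, zero_tmul, zero_add] at hgen
    have hmem : (x : M) ⊗ₜ[K] dN y ∈ Bd := by
      have h3 := zsmul_mem hgen ((Int.negOnePow i0 : ℤ))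
      rwa [hunit] at h3
    have hmem' : (x : M) ⊗ₜ[K] ((k : ↥(𝒩 j0)) : N) ∈ Bd := hdy ▸ hmem
    exact Submodule.mem_sup_left hmem'
  have hrange2 : LinearMap.range (LinearMap.rTensor ↥(𝒩 j0) (LinearMap.ker cM).subtype)
      ≤ LinearMap.ker L := by
    rw [LinearMap.range_le_ker_iff]
    apply TensorProduct.ext'
    intro k y
    simp only [LinearMap.comp_apply, LinearMap.rTensor_tmul, LinearMap.zero_apply]
    have hk : clsM (((k : ↥(ℳ i0)) : M)) = 0 := LinearMap.mem_ker.mp k.2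
    obtain ⟨w, hw, hdw⟩ := (hclsMker _ (k : ↥(ℳ i0)).2).mp hk
    rw [hL, Submodule.Quotient.mk_eq_zero]
    refine Submodule.mem_comap.mpr ?_
    have hdn : dN (y : N) = 0 := hNtop (j0 + 1) (by omega) _ (hdN j0 _ y.2)
    have hy' : (y : N) ∈ 𝒩 (i0 + j0 - 1 - (i0 - 1)) := by
      rw [show i0 + j0 - 1 - (i0 - 1) = j0 by ring]; exact y.2
    have hgen : dM w ⊗ₜ[K] (y : N) + (Int.negOnePow (i0 - 1) : ℤ) • (w ⊗ₜ[K] dN (y : N)) ∈ Bd :=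
      Submodule.subset_span ⟨i0 - 1, w, hw, (y : N), hy', rfl⟩
    rw [hdn, tmul_zero, smul_zero, add_zero] at hgen
    have hmem' : ((k : ↥(ℳ i0)) : M) ⊗ₜ[K] (y : N) ∈ Bd := hdw ▸ hgen
    exact Submodule.mem_sup_left hmem'
  have hkermap : LinearMap.ker (TensorProduct.map cM cN)
      = LinearMap.range (LinearMap.lTensor ↥(ℳ i0) (LinearMap.ker cN).subtype)
        ⊔ LinearMap.range (LinearMap.rTensor ↥(𝒩 j0) (LinearMap.ker cM).subtype) :=
    TensorProduct.map_ker (LinearMap.exact_subtype_ker_map cM) hcMsurj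
      (LinearMap.exact_subtype_ker_map cN) hcNsurj
  obtain ⟨g, hg⟩ := my_descend (TensorProduct.map cM cN)
    (TensorProduct.map_surjective hcMsurj hcNsurj) L
    (fun z hz => LinearMap.mem_ker.mp
      ((sup_le hrange1 hrange2) (hkermap ▸ LinearMap.mem_ker.mpr hz)))
  have hgtmul : ∀ (x : ↥(ℳ i0)) (y : ↥(𝒩 j0)),
      g (cM x ⊗ₜ[K] cN y)
        = Submodule.Quotient.mk (⟨(x : M) ⊗ₜ[K] (y : N), memS _ x.2 _ y.2⟩ : ↥S) := by
    intro x y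
    have := hg (x ⊗ₜ[K] y)
    rwa [TensorProduct.map_tmul, hL] at this
  have hbrelAb : brelK K Ab HM HN ≤ LinearMap.ker g := by
    intro x hx
    rw [LinearMap.mem_ker]
    refine Submodule.span_induction (p := fun x _ => g x = 0) ?_ (map_zero g)
      (fun u v _ _ hu hv => by show g (u + v) = 0; rw [map_add, hu, hv, add_zero])
      (fun k u _ hu => by show g (k • u) = 0; rw [map_smul]; show k • g u = 0; rw [hu, smul_zero]) hx
    rintro _ ⟨α, x', y', rfl⟩
    obtain ⟨aR, haR, rfl⟩ := hprsurj α
    obtain ⟨mm, hmm, rfl⟩ := hclsMsurj x'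
    obtain ⟨nn, hnn, rfl⟩ := hclsNsurj y'
    have ham : op aR • mm ∈ ℳ i0 := by
      have := hMact 0 i0 _ haR _ hmm; rwa [add_zero] at this
    have han : aR • nn ∈ 𝒩 j0 := by
      have := hNact 0 j0 _ haR _ hnn; rwa [zero_add] at this
    have e1 : op (prA aR) • clsM mm = cM ⟨op aR • mm, ham⟩ := (hclsMact _ haR _ hmm).symm
    have e2 : prA aR • clsN nn = cN ⟨aR • nn, han⟩ := (hclsNact _ haR _ hnn).symm
    have e3 : clsM mm = cM ⟨mm, hmm⟩ := rfl
    have e4 : clsN nn = cN ⟨nn, hnn⟩ := rfl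
    rw [e1, e2, e3, e4, map_sub, hgtmul, hgtmul, sub_eq_zero, Submodule.Quotient.eq]
    refine Submodule.mem_comap.mpr (Submodule.mem_sup_right
      (Submodule.subset_span ⟨aR, mm, nn, ?_⟩))
    simp
  set θ0 : BTK K Ab HM HN →ₗ[K] (↥S ⧸ pB) :=
    Submodule.liftQ (brelK K Ab HM HN) g hbrelAb with hθ0def
  have hθ0mk : ∀ z : HM ⊗[K] HN, θ0 (Submodule.Quotient.mk z) = g z := fun z => rfl
  have hcompute : ∀ m (hm : m ∈ ℳ i0) n (hn : n ∈ 𝒩 j0),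
      θ0 (BTK.mk (clsM m) (clsN n))
        = Submodule.Quotient.mk (⟨m ⊗ₜ[K] n, memS _ hm _ hn⟩ : ↥S) := by
    intro m hm n hn
    have e3 : clsM m = cM ⟨m, hm⟩ := rfl
    have e4 : clsN n = cN ⟨n, hn⟩ := rfl
    show θ0 (Submodule.Quotient.mk (clsM m ⊗ₜ[K] clsN n)) = _
    rw [hθ0mk, e3, e4, hgtmul]
  have hΦmn : ∀ m (hm : m ∈ ℳ i0) n (hn : n ∈ 𝒩 j0),
      Φ (m ⊗ₜ[K] n) = BTK.mk (clsM m) (clsN n) := by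
    intro m hm n hn
    rw [hΦ, hπM hm, hπN hn]
    rfl
  have mk_zeroS : ∀ (h : (0 : M ⊗[K] N) ∈ S),
      (Submodule.Quotient.mk (⟨0, h⟩ : ↥S) : ↥S ⧸ pB) = 0 := fun h => by
    rw [show (⟨0, h⟩ : ↥S) = 0 from Subtype.ext rfl, Submodule.Quotient.mk_zero]
  have mk_addS : ∀ (x y : M ⊗[K] N) (hx : x ∈ S) (hy : y ∈ S) (hxy : x + y ∈ S),
      (Submodule.Quotient.mk (⟨x + y, hxy⟩ : ↥S) : ↥S ⧸ pB)
        = Submodule.Quotient.mk ⟨x, hx⟩ + Submodule.Quotient.mk ⟨y, hy⟩ := by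
    intro x y hx hy hxy
    rw [show (⟨x + y, hxy⟩ : ↥S) = ⟨x, hx⟩ + ⟨y, hy⟩ from Subtype.ext rfl,
      Submodule.Quotient.mk_add]
  have mk_smulS : ∀ (k : K) (x : M ⊗[K] N) (hx : x ∈ S) (hkx : k • x ∈ S),
      (Submodule.Quotient.mk (⟨k • x, hkx⟩ : ↥S) : ↥S ⧸ pB)
        = k • Submodule.Quotient.mk ⟨x, hx⟩ := by
    intro k x hx hkx
    rw [show (⟨k • x, hkx⟩ : ↥S) = k • (⟨x, hx⟩ : ↥S) from Subtype.ext rfl,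
      Submodule.Quotient.mk_smul]
  have hid1 : ∀ t : ↥S, θ0 (ψ (Submodule.Quotient.mk t)) = Submodule.Quotient.mk t := by
    intro t
    obtain ⟨x, hx⟩ := t
    induction hx using Submodule.span_induction with
    | mem x h =>
      obtain ⟨i, m, hm, n, hn, rfl⟩ := h
      by_cases hi : i = i0
      · subst hi
        have hn' : n ∈ 𝒩 j0 := by rwa [show i + j0 - i = j0 by ring] at hn
        rw [hψ, hΦmn m hm n hn', hcompute m hm n hn']
      · have hx0 : m ⊗ₜ[K] n = (0 : M ⊗[K] N) := by
          rcases lt_or_ge i0 i with h' | h'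
          · rw [hMtop i h' m hm, zero_tmul]
          · have hgt : j0 < i0 + j0 - i := by omega
            rw [hNtop _ hgt n hn, tmul_zero]
        simp only [hx0]
        rw [mk_zeroS]
        simp
    | zero =>
      rw [mk_zeroS]
      simp
    | add x y hxS hyS ihx ihy =>
      rw [mk_addS x y hxS hyS, map_add, map_add, ihx, ihy]
    | smul k x hxS ih =>
      rw [mk_smulS k x hxS, map_smul, map_smul, ih]
  have hid2 : ∀ bkt : BTK K Ab HM HN, ψ (θ0 bkt) = bkt := by
    intro bkt
    obtain ⟨z, rfl⟩ := Submodule.Quotient.mk_surjective _ bkt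
    induction z using TensorProduct.induction_on with
    | zero =>
      rw [Submodule.Quotient.mk_zero, map_zero, map_zero]
    | tmul x y =>
      obtain ⟨m, hm, rfl⟩ := hclsMsurj x
      obtain ⟨n, hn, rfl⟩ := hclsNsurj y
      have h1 : (Submodule.Quotient.mk (clsM m ⊗ₜ[K] clsN n) : BTK K Ab HM HN)
          = BTK.mk (clsM m) (clsN n) := rfl
      rw [h1, hcompute m hm n hn, hψ, hΦmn m hm n hn]
    | add u v hu hv =>
      rw [Submodule.Quotient.mk_add, map_add, map_add, hu, hv]
  have hcomp1 : θ0 ∘ₗ ψ = LinearMap.id := by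
    apply LinearMap.ext
    intro q
    obtain ⟨t, rfl⟩ := Submodule.Quotient.mk_surjective _ q
    simpa using hid1 t
  have hcomp2 : ψ ∘ₗ θ0 = LinearMap.id := by
    apply LinearMap.ext
    intro bkt
    simpa using hid2 bkt
  refine ⟨LinearEquiv.ofLinear θ0 ψ hcomp1 hcomp2, fun m hm n hn => ?_, fun θ' hθ' => ?_⟩
  · rw [LinearEquiv.ofLinear_apply, hcompute m hm n hn]
  · apply DFunLike.ext
    intro bkt
    obtain ⟨z, rfl⟩ := Submodule.Quotient.mk_surjective _ bkt
    induction z using TensorProduct.induction_on with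
    | zero =>
      rw [Submodule.Quotient.mk_zero, map_zero, map_zero]
    | tmul x y =>
      obtain ⟨m, hm, rfl⟩ := hclsMsurj x
      obtain ⟨n, hn, rfl⟩ := hclsNsurj y
      have h1 : (Submodule.Quotient.mk (clsM m ⊗ₜ[K] clsN n) : BTK K Ab HM HN)
          = BTK.mk (clsM m) (clsN n) := rfl
      rw [h1, hθ' m hm n hn, LinearEquiv.ofLinear_apply, hcompute m hm n hn]
    | add u v hu hv =>
      rw [Submodule.Quotient.mk_add, map_add, map_add, hu, hv]

end
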